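/- Fix integers d ≥ 1, k ≥ 1 and σ > 0. For each i ∈ {1,…,k} let g_i(x,y) be the joint density of a pair of independent Gaussians (N(d+i, (d+i)σ²), N(d+k-i, (d+k-i)σ²)). Then ∫∫ max_{1 ≤ i ≤ k} g_i(x,y) dx dy < (2(d+k)/d)·exp(k²/(2(d+k)σ²)). -/

import Mathlib

open Real MeasureTheory

/-- Joint density of the pair of independent Gaussians
`(N(d+i, (d+i)σ²), N(d+k-i, (d+k-i)σ²))`. -/
noncomputable def gaussPairDensity (d k i : ℕ) (σ : ℝ) (x y : ℝ) : ℝ :=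
  (1 / (2 * Real.pi * σ ^ 2 *
      Real.sqrt (((d : ℝ) + i) * ((d : ℝ) + k - i)))) *
    Real.exp (-(x - ((d : ℝ) + i)) ^ 2 / (2 * ((d : ℝ) + i) * σ ^ 2)
      - (y - ((d : ℝ) + k - i)) ^ 2 / (2 * ((d : ℝ) + k - i) * σ ^ 2))

lemma one_dim_aux {a A t x e : ℝ} (ha : 0 < a) (haA : a ≤ A) (ht : 0 < t) :
    (x - e) ^ 2 / (4 * A * t) ≤ (a - e) ^ 2 / (2 * A * t) + (x - a) ^ 2 / (2 * a * t) := by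
  have hA : 0 < A := ha.trans_le haA
  rw [div_add_div _ _ (by positivity) (by positivity),
    div_le_div_iff₀ (by positivity) (by positivity)]
  nlinarith [mul_nonneg (mul_nonneg (mul_nonneg hA.le ha.le) (sq_nonneg t)) (sq_nonneg (x - 2 * a + e)),
    mul_nonneg (mul_nonneg (mul_nonneg hA.le (sub_nonneg.2 haA)) (sq_nonneg t)) (sq_nonneg (x - a)),
    sq_nonneg (x - 2 * a + e), sq_nonneg (x - a), hA.le, ha.le, ht.le]

lemma gauss_pointwise_le (d k i : ℕ) (σ : ℝ) (hd : 1 ≤ d) (hσ : 0 < σ)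
    (hi1 : 1 ≤ i) (hik : i ≤ k) (x y : ℝ) :
    gaussPairDensity d k i σ x y ≤
      (Real.exp ((k : ℝ) ^ 2 / (2 * ((d : ℝ) + k) * σ ^ 2)) /
        (2 * Real.pi * σ ^ 2 * Real.sqrt ((d : ℝ) * ((d : ℝ) + 1)))) *
      (Real.exp (-(x - (d : ℝ)) ^ 2 / (4 * ((d : ℝ) + k) * σ ^ 2)) *
       Real.exp (-(y - (d : ℝ)) ^ 2 / (4 * ((d : ℝ) + k) * σ ^ 2))) := by
  set A : ℝ := (d : ℝ) + k with hA_def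
  set a : ℝ := (d : ℝ) + i with ha_def
  set c : ℝ := (d : ℝ) + k - i with hc_def
  have hd1 : (1 : ℝ) ≤ d := by exact_mod_cast hd
  have hi1' : (1 : ℝ) ≤ i := by exact_mod_cast hi1
  have hik' : (i : ℝ) ≤ k := by exact_mod_cast hik
  have ha : 0 < a := by simp only [ha_def]; linarith
  have hc : (d : ℝ) ≤ c := by simp only [hc_def]; linarith
  have hc0 : 0 < c := lt_of_lt_of_le (by linarith) hc
  have haA : a ≤ A := by simp only [ha_def, hA_def]; linarith
  have hcA : c ≤ A := by simp only [hc_def, hA_def]; linarith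
  have hA : 0 < A := ha.trans_le haA
  have ht : (0 : ℝ) < σ ^ 2 := by positivity
  have hsq : 0 < Real.sqrt ((d : ℝ) * ((d : ℝ) + 1)) :=
    Real.sqrt_pos.2 (by nlinarith)
  -- prefactor bound
  have hP : 1 / (2 * Real.pi * σ ^ 2 * Real.sqrt (a * c)) ≤
      1 / (2 * Real.pi * σ ^ 2 * Real.sqrt ((d : ℝ) * ((d : ℝ) + 1))) := by
    have hle : (d : ℝ) * ((d : ℝ) + 1) ≤ a * c := by
      have ha1 : (d : ℝ) + 1 ≤ a := by simp only [ha_def]; linarith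
      nlinarith
    have hss : Real.sqrt ((d : ℝ) * ((d : ℝ) + 1)) ≤ Real.sqrt (a * c) :=
      Real.sqrt_le_sqrt hle
    have hpos : 0 < 2 * Real.pi * σ ^ 2 * Real.sqrt ((d : ℝ) * ((d : ℝ) + 1)) :=
      mul_pos (mul_pos (mul_pos two_pos Real.pi_pos) ht) hsq
    exact one_div_le_one_div_of_le hpos (mul_le_mul_of_nonneg_left hss (by positivity))
  -- exponent bound
  have h1 := one_dim_aux (a := a) (A := A) (t := σ ^ 2) (x := x) (e := (d : ℝ)) ha haA ht
  have h2 := one_dim_aux (a := c) (A := A) (t := σ ^ 2) (x := y) (e := (d : ℝ)) hc0 hcA ht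
  have h3 : (a - (d : ℝ)) ^ 2 + (c - (d : ℝ)) ^ 2 ≤ (k : ℝ) ^ 2 := by
    have hae : a - (d : ℝ) = (i : ℝ) := by rw [ha_def]; try ring
    have hce : c - (d : ℝ) = (k : ℝ) - i := by rw [hc_def]; try ring
    rw [hae, hce]
    nlinarith
  have h4 : (a - (d : ℝ)) ^ 2 / (2 * A * σ ^ 2) + (c - (d : ℝ)) ^ 2 / (2 * A * σ ^ 2) ≤
      (k : ℝ) ^ 2 / (2 * A * σ ^ 2) := by
    rw [← add_div]
    gcongr
  have hE : -(x - a) ^ 2 / (2 * a * σ ^ 2) - (y - c) ^ 2 / (2 * c * σ ^ 2) ≤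
      (k : ℝ) ^ 2 / (2 * A * σ ^ 2) + -(x - (d : ℝ)) ^ 2 / (4 * A * σ ^ 2)
        + -(y - (d : ℝ)) ^ 2 / (4 * A * σ ^ 2) := by
    simp only [neg_div]
    linarith [h1, h2, h4]
  have hexp : Real.exp (-(x - a) ^ 2 / (2 * a * σ ^ 2)
        - (y - c) ^ 2 / (2 * c * σ ^ 2)) ≤
      Real.exp ((k : ℝ) ^ 2 / (2 * A * σ ^ 2))
        * Real.exp (-(x - (d : ℝ)) ^ 2 / (4 * A * σ ^ 2))
        * Real.exp (-(y - (d : ℝ)) ^ 2 / (4 * A * σ ^ 2)) := by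
    rw [← Real.exp_add, ← Real.exp_add]
    exact Real.exp_le_exp.2 (by linarith [hE])
  have hgd : gaussPairDensity d k i σ x y =
      (1 / (2 * Real.pi * σ ^ 2 * Real.sqrt (a * c))) *
        Real.exp (-(x - a) ^ 2 / (2 * a * σ ^ 2)
          - (y - c) ^ 2 / (2 * c * σ ^ 2)) := rfl
  rw [hgd]
  calc (1 / (2 * Real.pi * σ ^ 2 * Real.sqrt (a * c))) *
        Real.exp (-(x - a) ^ 2 / (2 * a * σ ^ 2) - (y - c) ^ 2 / (2 * c * σ ^ 2))
      ≤ (1 / (2 * Real.pi * σ ^ 2 * Real.sqrt ((d : ℝ) * ((d : ℝ) + 1)))) *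
        (Real.exp ((k : ℝ) ^ 2 / (2 * A * σ ^ 2))
          * Real.exp (-(x - (d : ℝ)) ^ 2 / (4 * A * σ ^ 2))
          * Real.exp (-(y - (d : ℝ)) ^ 2 / (4 * A * σ ^ 2))) := by
        apply mul_le_mul hP hexp (Real.exp_pos _).le (by positivity)
    _ = _ := by rw [hA_def]; ring

theorem integral_max_gauss_density_lt (d k : ℕ) (σ : ℝ) (hd : 1 ≤ d) (hk : 1 ≤ k)
    (hσ : 0 < σ) :
    (∫ p : ℝ × ℝ,
        (Finset.Icc 1 k).sup' (Finset.nonempty_Icc.mpr hk)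
          (fun i => gaussPairDensity d k i σ p.1 p.2)) <
      (2 * ((d : ℝ) + k) / d) * Real.exp (k ^ 2 / (2 * ((d : ℝ) + k) * σ ^ 2)) := by
  have hd1 : (1 : ℝ) ≤ d := by exact_mod_cast hd
  have hk1 : (1 : ℝ) ≤ k := by exact_mod_cast hk
  set A : ℝ := (d : ℝ) + k with hA_def
  have hA : 0 < A := by positivity
  set K : ℝ := Real.exp ((k : ℝ) ^ 2 / (2 * A * σ ^ 2)) /
    (2 * Real.pi * σ ^ 2 * Real.sqrt ((d : ℝ) * ((d : ℝ) + 1))) with hK_def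
  set f1 : ℝ → ℝ := fun x => Real.exp (-(x - (d : ℝ)) ^ 2 / (4 * A * σ ^ 2)) with hf1_def
  have hb : (0 : ℝ) < (4 * A * σ ^ 2)⁻¹ := by positivity
  have hf1eq : f1 = fun x => Real.exp (-(4 * A * σ ^ 2)⁻¹ * (x - (d : ℝ)) ^ 2) := by
    funext x
    simp only [hf1_def]
    congr 1
    ring
  have hint1 : Integrable f1 := by
    rw [hf1eq]
    exact (integrable_exp_neg_mul_sq hb).comp_sub_right (d : ℝ)
  have hInt : Integrable (fun p : ℝ × ℝ => K * (f1 p.1 * f1 p.2)) := by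
    apply Integrable.const_mul
    rw [Measure.volume_eq_prod]
    exact hint1.mul_prod hint1
  have hI1 : ∫ x : ℝ, f1 x = Real.sqrt (Real.pi / (4 * A * σ ^ 2)⁻¹) := by
    rw [hf1eq]
    rw [show (fun x : ℝ => Real.exp (-(4 * A * σ ^ 2)⁻¹ * (x - (d : ℝ)) ^ 2)) =
      (fun x : ℝ => (fun y : ℝ => Real.exp (-(4 * A * σ ^ 2)⁻¹ * y ^ 2)) (x - (d : ℝ))) from rfl]
    rw [integral_sub_right_eq_self (μ := volume)
      (fun y : ℝ => Real.exp (-(4 * A * σ ^ 2)⁻¹ * y ^ 2)) (d : ℝ)]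
    exact integral_gaussian _
  have hmem1 : (1 : ℕ) ∈ Finset.Icc 1 k := Finset.mem_Icc.mpr ⟨le_refl 1, hk⟩
  have hnn : ∀ p : ℝ × ℝ, 0 ≤ (Finset.Icc 1 k).sup' (Finset.nonempty_Icc.mpr hk)
      (fun i => gaussPairDensity d k i σ p.1 p.2) := by
    intro p
    refine le_trans ?_ (Finset.le_sup' (fun i => gaussPairDensity d k i σ p.1 p.2) hmem1)
    unfold gaussPairDensity
    positivity
  have hpt : ∀ p : ℝ × ℝ, (Finset.Icc 1 k).sup' (Finset.nonempty_Icc.mpr hk)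
      (fun i => gaussPairDensity d k i σ p.1 p.2) ≤ K * (f1 p.1 * f1 p.2) := by
    intro p
    apply Finset.sup'_le
    intro i hi
    obtain ⟨hi1, hik⟩ := Finset.mem_Icc.mp hi
    exact gauss_pointwise_le d k i σ hd hσ hi1 hik p.1 p.2
  have hle : (∫ p : ℝ × ℝ, (Finset.Icc 1 k).sup' (Finset.nonempty_Icc.mpr hk)
      (fun i => gaussPairDensity d k i σ p.1 p.2)) ≤ K * (4 * Real.pi * A * σ ^ 2) := by
    calc (∫ p : ℝ × ℝ, (Finset.Icc 1 k).sup' (Finset.nonempty_Icc.mpr hk)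
        (fun i => gaussPairDensity d k i σ p.1 p.2))
        ≤ ∫ p : ℝ × ℝ, K * (f1 p.1 * f1 p.2) :=
          integral_mono_of_nonneg (Filter.Eventually.of_forall hnn) hInt
            (Filter.Eventually.of_forall hpt)
      _ = K * ∫ p : ℝ × ℝ, f1 p.1 * f1 p.2 := by rw [integral_const_mul]
      _ = K * ((∫ x : ℝ, f1 x) * (∫ x : ℝ, f1 x)) := by
          rw [Measure.volume_eq_prod, integral_prod_mul]
      _ = K * (Real.pi / (4 * A * σ ^ 2)⁻¹) := by
          rw [hI1, Real.mul_self_sqrt (by positivity)]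
      _ = K * (4 * Real.pi * A * σ ^ 2) := by
          rw [div_eq_mul_inv, inv_inv]; ring
  refine lt_of_le_of_lt hle ?_
  have hsq : 0 < Real.sqrt ((d : ℝ) * ((d : ℝ) + 1)) := Real.sqrt_pos.2 (by nlinarith)
  have hKval : K * (4 * Real.pi * A * σ ^ 2) =
      (2 * A / Real.sqrt ((d : ℝ) * ((d : ℝ) + 1))) *
        Real.exp ((k : ℝ) ^ 2 / (2 * A * σ ^ 2)) := by
    rw [hK_def]
    have hπ : Real.pi ≠ 0 := Real.pi_ne_zero
    field_simp
    ring
  rw [hKval]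
  have hdlt : (d : ℝ) < Real.sqrt ((d : ℝ) * ((d : ℝ) + 1)) := by
    have h0d : (0 : ℝ) ≤ (d : ℝ) := Nat.cast_nonneg d
    nth_rewrite 1 [show (d : ℝ) = Real.sqrt ((d : ℝ) ^ 2) from (Real.sqrt_sq h0d).symm]
    apply Real.sqrt_lt_sqrt (by positivity)
    nlinarith
  have h2A : 0 < 2 * A := by linarith
  have hfrac : 2 * A / Real.sqrt ((d : ℝ) * ((d : ℝ) + 1)) < 2 * A / d :=
    div_lt_div_of_pos_left h2A (by linarith) hdlt
  exact mul_lt_mul_of_pos_right hfrac (Real.exp_pos _)
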